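/- Fix integers k, r ≥ 2 with (r, k) ≠ (2, 2), let h_{r,k}(μ) = μ / f_{k−1}(μ)^{r−1}, and suppose μ > 0 is a critical point of h_{r,k} (the derivative of h_{r,k} at μ is 0). Define α = f_k(μ), β = (1/r)·μ·f_{k−1}(μ), and ρ̄ = e^{−μ} μ^k / (f_k(μ)·k!). Then (k·ρ̄·α)/(r·β) = 1/((r−1)(k−1)). -/

import Mathlib

/-- `fPo k μ = e^{-μ} ∑_{i ≥ k} μ^i / i!`, the probability that a Poisson random
variable with mean `μ` is at least `k`. -/
noncomputable def fPo (k : ℕ) (μ : ℝ) : ℝ :=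
  Real.exp (-μ) * ∑' i : ℕ, μ ^ (k + i) / (Nat.factorial (k + i) : ℝ)

/-- `hFun r k μ = μ / f_{k-1}(μ)^{r-1}`. -/
noncomputable def hFun (r k : ℕ) (μ : ℝ) : ℝ := μ / (fPo (k - 1) μ) ^ (r - 1)

lemma exp_eq_tsum' (μ : ℝ) : Real.exp μ = ∑' n : ℕ, μ ^ n / (Nat.factorial n : ℝ) := by
  rw [Real.exp_eq_exp_ℝ, NormedSpace.exp_eq_tsum_div]

lemma fPo_closed (k : ℕ) (μ : ℝ) :
    fPo k μ = Real.exp (-μ) *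
      (Real.exp μ - ∑ i ∈ Finset.range k, μ ^ i / (Nat.factorial i : ℝ)) := by
  unfold fPo
  congr 1
  have hs := Real.summable_pow_div_factorial μ
  have := Summable.sum_add_tsum_nat_add (f := fun i : ℕ => μ ^ i / (Nat.factorial i : ℝ)) k hs
  rw [exp_eq_tsum', ← this]
  simp [add_comm]

lemma fPo_pos (k : ℕ) {μ : ℝ} (hμ : 0 < μ) : 0 < fPo k μ := by
  unfold fPo
  apply mul_pos (Real.exp_pos _)
  have hs : Summable (fun i : ℕ => μ ^ (k + i) / (Nat.factorial (k + i) : ℝ)) := by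
    have := (summable_nat_add_iff (f := fun i : ℕ => μ ^ i / (Nat.factorial i : ℝ)) k).2
      (Real.summable_pow_div_factorial μ)
    simpa [add_comm] using this
  refine Summable.tsum_pos hs (fun i => by positivity) 0 (by positivity)

lemma hasDerivAt_fPo (k : ℕ) (μ : ℝ) :
    HasDerivAt (fPo (k + 1)) (Real.exp (-μ) * (μ ^ k / (Nat.factorial k : ℝ))) μ := by
  have hS : HasDerivAt (fun x : ℝ => ∑ i ∈ Finset.range (k + 1), x ^ i / (Nat.factorial i : ℝ))
      (∑ i ∈ Finset.range k, μ ^ i / (Nat.factorial i : ℝ)) μ := by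
    have h1 : HasDerivAt (fun x : ℝ => ∑ i ∈ Finset.range (k + 1), x ^ i / (Nat.factorial i : ℝ))
        (∑ i ∈ Finset.range (k + 1), (i : ℝ) * μ ^ (i - 1) / (Nat.factorial i : ℝ)) μ := by
      apply HasDerivAt.fun_sum
      intro i _
      simpa [div_eq_mul_inv, mul_comm, mul_assoc, mul_left_comm] using
        ((hasDerivAt_pow i μ).div_const (Nat.factorial i : ℝ))
    convert h1 using 1
    rw [Finset.sum_range_succ' (fun i => (i : ℝ) * μ ^ (i - 1) / (Nat.factorial i : ℝ)) k]
    simp only [Nat.cast_zero, zero_mul, Nat.factorial_zero, Nat.cast_one, zero_div, add_zero]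
    apply Finset.sum_congr rfl
    intro i _
    rw [Nat.factorial_succ]
    push_cast
    have : (i : ℝ) + 1 ≠ 0 := by positivity
    field_simp
  have h2 : HasDerivAt (fun x : ℝ => Real.exp (-x) *
      (Real.exp x - ∑ i ∈ Finset.range (k + 1), x ^ i / (Nat.factorial i : ℝ)))
      (Real.exp (-μ) * (μ ^ k / (Nat.factorial k : ℝ))) μ := by
    have he : HasDerivAt (fun x : ℝ => Real.exp (-x)) (-Real.exp (-μ)) μ := by
      simpa [Function.comp_def] using ((Real.hasDerivAt_exp (-μ)).comp μ ((hasDerivAt_id μ).neg))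
    have hg : HasDerivAt (fun x : ℝ => Real.exp x -
        ∑ i ∈ Finset.range (k + 1), x ^ i / (Nat.factorial i : ℝ))
        (Real.exp μ - ∑ i ∈ Finset.range k, μ ^ i / (Nat.factorial i : ℝ)) μ :=
      (Real.hasDerivAt_exp μ).sub hS
    have := he.mul hg
    refine this.congr_deriv ?_
    rw [Finset.sum_range_succ]
    ring
  have : fPo (k + 1) = fun x : ℝ => Real.exp (-x) *
      (Real.exp x - ∑ i ∈ Finset.range (k + 1), x ^ i / (Nat.factorial i : ℝ)) := by
    funext x; exact fPo_closed (k + 1) x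
  rw [this]
  exact h2

theorem stmt11 (k r : ℕ) (hk : 2 ≤ k) (hr : 2 ≤ r) (hne : ¬(r = 2 ∧ k = 2))
    (μ : ℝ) (hμ : 0 < μ) (hcrit : deriv (hFun r k) μ = 0) :
    ((k : ℝ) * (Real.exp (-μ) * μ ^ k / (fPo k μ * (Nat.factorial k : ℝ))) * fPo k μ) /
        ((r : ℝ) * ((1 / (r : ℝ)) * μ * fPo (k - 1) μ)) =
      1 / (((r : ℝ) - 1) * ((k : ℝ) - 1)) := by
  obtain ⟨n, rfl⟩ : ∃ n, k = n + 2 := ⟨k - 2, by omega⟩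
  obtain ⟨m, rfl⟩ : ∃ m, r = m + 2 := ⟨r - 2, by omega⟩
  clear hk hr hne
  have hF : 0 < fPo (n + 1) μ := fPo_pos _ hμ
  have hFk : 0 < fPo (n + 2) μ := fPo_pos _ hμ
  set F := fPo (n + 1) μ with hFdef
  have hf' : HasDerivAt (fPo (n + 1)) (Real.exp (-μ) * (μ ^ n / (Nat.factorial n : ℝ))) μ :=
    hasDerivAt_fPo n μ
  have hden : HasDerivAt (fun x : ℝ => (fPo (n + 1) x) ^ (m + 1))
      (((m : ℝ) + 1) * F ^ m * (Real.exp (-μ) * (μ ^ n / (Nat.factorial n : ℝ)))) μ := by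
    simpa using hf'.fun_pow (m + 1)
  have hdiv : HasDerivAt (fun x : ℝ => x / (fPo (n + 1) x) ^ (m + 1))
      ((1 * F ^ (m + 1) - μ * (((m : ℝ) + 1) * F ^ m *
        (Real.exp (-μ) * (μ ^ n / (Nat.factorial n : ℝ))))) / (F ^ (m + 1)) ^ 2) μ :=
    (hasDerivAt_id μ).div hden (by positivity)
  have hhFun : hFun (m + 2) (n + 2) = fun x : ℝ => x / (fPo (n + 1) x) ^ (m + 1) := by
    funext x; simp [hFun]
  rw [hhFun, hdiv.deriv] at hcrit
  have hnum : F ^ (m + 1) = μ * (((m : ℝ) + 1) * F ^ m *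
      (Real.exp (-μ) * (μ ^ n / (Nat.factorial n : ℝ)))) := by
    have h2 : (F ^ (m + 1)) ^ 2 ≠ 0 := by positivity
    have := (div_eq_zero_iff.mp hcrit).resolve_right h2
    linarith
  have hkey : F = μ * ((m : ℝ) + 1) * (Real.exp (-μ) * (μ ^ n / (Nat.factorial n : ℝ))) := by
    have hFm : F ^ m ≠ 0 := by positivity
    have : F * F ^ m = (μ * ((m : ℝ) + 1) *
        (Real.exp (-μ) * (μ ^ n / (Nat.factorial n : ℝ)))) * F ^ m := by
      rw [← pow_succ']; rw [hnum]; ring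
    exact mul_right_cancel₀ hFm this
  have hshow : (fPo (n + 2 - 1) μ) = F := by norm_num [hFdef]
  rw [hshow, hkey]
  have hfac2 : (Nat.factorial (n + 2) : ℝ)
      = ((n : ℝ) + 2) * ((n : ℝ) + 1) * (Nat.factorial n : ℝ) := by
    rw [Nat.factorial_succ, Nat.factorial_succ]; push_cast; ring
  rw [hfac2]
  have h1 : (Nat.factorial n : ℝ) ≠ 0 := by positivity
  have h2 : fPo (n + 2) μ ≠ 0 := ne_of_gt hFk
  have h4 : μ ≠ 0 := ne_of_gt hμ
  push_cast
  have e1 : ((m : ℝ) + 2 - 1) * ((n : ℝ) + 2 - 1) = ((m : ℝ) + 1) * ((n : ℝ) + 1) := by ring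
  rw [e1, div_eq_div_iff (by positivity) (by positivity)]
  field_simp
  ring
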